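/- The set of classically unsatisfiable first-order sentences in the full vocabulary is Σ₁-hard: for every recursively enumerable set A ⊆ ℕ (i.e., A is the domain of a partial computable function), A is many-one reducible to the set of natural-number codes (under a fixed computable encoding of sentences) of sentences of L that have no model, where L is the first-order language with countably many function symbols of every arity and countably many relation symbols of every arity. -/

import Mathlib

open FirstOrder

/-- The full vocabulary: countably many function symbols of every arity and countably
many relation symbols of every arity. -/
def fullLang : FirstOrder.Language where
  Functions := fun _ => ℕ
  Relations := fun _ => ℕ

instance : Encodable (Σ i, fullLang.Functions i) :=
  inferInstanceAs (Encodable (Σ _ : ℕ, ℕ))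

instance : Encodable (Σ i, fullLang.Relations i) :=
  inferInstanceAs (Encodable (Σ _ : ℕ, ℕ))

/-- A fixed computable encoding of sentences of the full vocabulary by natural numbers,
obtained by encoding the list of symbols of the sentence. -/
def sentenceCode (φ : fullLang.Sentence) : ℕ :=
  Encodable.encode (Language.BoundedFormula.listEncode φ)

namespace Sigma1Hard
open Language

inductive PTree : ℕ → Type
  | zero : PTree 0
  | succ : PTree 1
  | get {n : ℕ} (i : Fin n) : PTree n
  | comp {m n : ℕ} (f : PTree n) (g : Fin n → PTree m) : PTree m
  | prec {n : ℕ} (f : PTree n) (g : PTree (n + 2)) : PTree (n + 1)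

def PTree.denote : ∀ {n : ℕ}, PTree n → (Fin n → ℕ) → ℕ
  | _, .zero, _ => 0
  | _, .succ, v => v 0 + 1
  | _, .get i, v => v i
  | _, .comp f g, v => f.denote fun i => (g i).denote v
  | _, .prec f g, v =>
      Nat.rec (f.denote (v ∘ Fin.succ))
        (fun y IH => g.denote (Fin.cons y (Fin.cons IH (v ∘ Fin.succ)))) (v 0)

def PTree.enc : ∀ {n : ℕ}, PTree n → ℕ
  | _, .zero => Nat.pair 0 0
  | _, .succ => Nat.pair 1 0
  | n, .get i => Nat.pair 2 (Nat.pair n i)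
  | _, @PTree.comp _ n f g =>
      Nat.pair 3 (Nat.pair n (Nat.pair f.enc
        (Encodable.encode (List.ofFn fun i => (g i).enc))))
  | _, .prec f g => Nat.pair 4 (Nat.pair f.enc g.enc)

theorem PTree.enc_injective : ∀ {n : ℕ} (t t' : PTree n), t.enc = t'.enc → t = t' := by
  intro n t
  induction t with
  | zero => intro t' h; cases t' <;> simp_all [PTree.enc, Nat.pair_eq_pair]
  | succ => intro t' h; cases t' <;> simp_all [PTree.enc, Nat.pair_eq_pair]
  | get i => intro t' h
             cases t' <;> simp_all [PTree.enc, Nat.pair_eq_pair]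
             exact Fin.ext h
  | @comp m n f g ihf ihg =>
    intro t' h
    cases t' with
    | zero => simp_all [PTree.enc, Nat.pair_eq_pair]
    | succ => simp_all [PTree.enc, Nat.pair_eq_pair]
    | get i => simp_all [PTree.enc, Nat.pair_eq_pair]
    | prec f' g' => simp_all [PTree.enc, Nat.pair_eq_pair]
    | @comp _ n' f' g' =>
      simp only [PTree.enc, Nat.pair_eq_pair] at h
      obtain ⟨-, hn, hf, hg⟩ := h
      subst hn
      have hf' := ihf f' hf
      have hg' : g = g' := by
        funext i
        exact ihg i (g' i) (congrFun (List.ofFn_inj.1 (Encodable.encode_injective hg)) i)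
      rw [hf', hg']
  | @prec n f g ihf ihg =>
    intro t' h
    cases t' with
    | succ => simp_all [PTree.enc, Nat.pair_eq_pair]
    | get i => simp_all [PTree.enc, Nat.pair_eq_pair]
    | comp f' g' => simp_all [PTree.enc, Nat.pair_eq_pair]
    | prec f' g' =>
      simp only [PTree.enc, Nat.pair_eq_pair] at h
      rw [ihf f' h.2.1, ihg g' h.2.2]

theorem exists_tree {n : ℕ} {f : List.Vector ℕ n → ℕ} (h : Nat.Primrec' f) :
    ∃ t : PTree n, ∀ v : List.Vector ℕ n, t.denote v.get = f v := by
  induction h with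
  | zero => exact ⟨.zero, fun v => rfl⟩
  | succ =>
    exact ⟨.succ, fun v => by simp [PTree.denote]⟩
  | get i => exact ⟨.get i, fun v => rfl⟩
  | comp g _ _ hf hg =>
    obtain ⟨tf, htf⟩ := hf
    choose tg htg using hg
    refine ⟨.comp tf tg, fun v => ?_⟩
    have : (fun i => (tg i).denote v.get) = (List.Vector.ofFn fun i => g i v).get := by
      funext i
      simp [htg i v]
    simp only [PTree.denote, this, htf]
  | @prec n f g _ _ hf hg =>
    obtain ⟨tf, htf⟩ := hf
    obtain ⟨tg, htg⟩ := hg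
    refine ⟨.prec tf tg, fun v => ?_⟩
    have hv : v.get ∘ Fin.succ = v.tail.get := by
      funext i; simp [List.Vector.get_tail_succ]
    have h0 : v.get 0 = v.head := by simp
    simp only [PTree.denote, hv, h0, htf]
    congr 1
    funext y IH
    have : (Fin.cons y (Fin.cons IH v.tail.get) : Fin (n+2) → ℕ)
        = (y ::ᵥ IH ::ᵥ v.tail).get := by
      funext i
      refine Fin.cases ?_ (fun j => ?_) i
      · simp
      · rw [show (j.succ : Fin (n+2)) = Fin.succ j from rfl, List.Vector.get_cons_succ]
        refine Fin.cases ?_ (fun j' => ?_) j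
        · simp
        · simp [List.Vector.get_cons_succ]
    rw [this, htg]

def zeroSym : fullLang.Functions 0 := (0 : ℕ)
def succSym : fullLang.Functions 1 := (0 : ℕ)
def fSym {n : ℕ} (t : PTree n) : fullLang.Functions n := (t.enc + 1 : ℕ)

open scoped Classical in
noncomputable def interpPos (n m : ℕ) : (Fin n → ℕ) → ℕ := fun v =>
  if h : ∃ t : PTree n, t.enc = m then h.choose.denote v else 0

noncomputable def interp (n s : ℕ) : (Fin n → ℕ) → ℕ :=
  match s with
  | 0 => match n with
    | 0 => fun _ => 0
    | 1 => fun v => v 0 + 1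
    | _ => fun _ => 0
  | m + 1 => interpPos n m

noncomputable instance stdStructure : fullLang.Structure ℕ where
  funMap {n} s v := interp n s v
  RelMap {n} _ _ := False

lemma funMap_fSym {n : ℕ} (t : PTree n) (v : Fin n → ℕ) :
    Structure.funMap (L := fullLang) (fSym t) v = t.denote v := by
  have h : ∃ t' : PTree n, PTree.enc t' = t.enc := ⟨t, rfl⟩
  show interpPos n t.enc v = t.denote v
  rw [interpPos, dif_pos h, PTree.enc_injective _ _ h.choose_spec]

lemma funMap_zeroSym (v : Fin 0 → ℕ) :
    Structure.funMap (L := fullLang) zeroSym v = 0 := rfl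
lemma funMap_succSym (v : Fin 1 → ℕ) :
    Structure.funMap (L := fullLang) succSym v = v 0 + 1 := rfl

/-- Numeral terms. -/
def num {α : Type} : ℕ → fullLang.Term α
  | 0 => Term.func zeroSym finZeroElim
  | n + 1 => Term.func succSym fun _ => num n

/-- Numeral values in a structure. -/
def numM (M : Type) [fullLang.Structure M] : ℕ → M
  | 0 => Structure.funMap zeroSym finZeroElim
  | n + 1 => Structure.funMap succSym fun _ => numM M n

lemma realize_num {M : Type} [fullLang.Structure M] {α : Type} (v : α → M) (n : ℕ) :
    (num n).realize v = numM M n := by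
  induction n with
  | zero =>
    rw [num, Term.realize_func, numM]
    congr 1
    funext i
    exact i.elim0
  | succ n ih =>
    rw [num, Term.realize_func, numM]
    congr 1
    funext i
    exact ih

lemma numM_nat (n : ℕ) : numM ℕ n = n := by
  induction n with
  | zero => rfl
  | succ n ih => rw [numM, funMap_succSym]; simp [ih]

/-- Variable terms. -/
def X {m : ℕ} (i : Fin m) : fullLang.Term (Empty ⊕ Fin m) := Term.var (Sum.inr i)

/-- The defining axioms of the function symbols attached to a tree. -/
def PTree.axioms : ∀ {n : ℕ}, PTree n → List fullLang.Sentence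
  | _, .zero =>
      [(Term.bdEqual (Term.func (fSym PTree.zero) finZeroElim) (num 0) :
        fullLang.BoundedFormula Empty 0).alls]
  | _, .succ =>
      [(Term.bdEqual (Term.func (fSym PTree.succ) fun _ => X 0)
          (Term.func succSym fun _ => X 0) : fullLang.BoundedFormula Empty 1).alls]
  | _, .get i =>
      [(Term.bdEqual (Term.func (fSym (PTree.get i)) fun j => X j) (X i)).alls]
  | _, .comp f g =>
      (Term.bdEqual (Term.func (fSym (f.comp g)) fun j => X j)
        (Term.func (fSym f) fun i => Term.func (fSym (g i)) fun j => X j)).alls ::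
      (f.axioms ++ (List.finRange _).flatMap fun i => (g i).axioms)
  | _, @PTree.prec n f g =>
      (Term.bdEqual (Term.func (fSym (f.prec g)) (Fin.cons (num 0) fun j => X j))
        (Term.func (fSym f) fun j => X j)).alls ::
      (Term.bdEqual
          (Term.func (fSym (f.prec g))
            (Fin.cons (Term.func succSym fun _ => X 0) fun j => X j.succ))
          (Term.func (fSym g)
            (Fin.cons (X 0)
              (Fin.cons (Term.func (fSym (f.prec g)) (Fin.cons (X 0) fun j => X j.succ))
                fun j => X j.succ)))).alls ::
      (f.axioms ++ g.axioms)

lemma realize_eqAx {M : Type} [fullLang.Structure M] {n : ℕ}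
    {t₁ t₂ : fullLang.Term (Empty ⊕ Fin n)}
    (h : M ⊨ (Term.bdEqual t₁ t₂ : fullLang.BoundedFormula Empty n).alls)
    (xs : Fin n → M) :
    t₁.realize (Sum.elim (default : Empty → M) xs) =
      t₂.realize (Sum.elim (default : Empty → M) xs) := by
  have h' : ∀ xs : Fin n → M, (Term.bdEqual t₁ t₂).Realize (default : Empty → M) xs :=
    BoundedFormula.realize_alls.1 h
  have := h' xs
  rwa [BoundedFormula.realize_bdEqual] at this

section Sound
variable {M : Type} [fullLang.Structure M]

@[simp] lemma realize_X {m : ℕ} (s : Fin m → M) (i : Fin m) :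
    Term.realize (Sum.elim (default : Empty → M) s) (X i) = s i := rfl

@[simp] lemma realize_cons {n m : ℕ} (s : Empty ⊕ Fin m → M)
    (a : fullLang.Term (Empty ⊕ Fin m)) (ts : Fin n → fullLang.Term (Empty ⊕ Fin m)) :
    (fun j : Fin (n + 1) => Term.realize s
      ((Fin.cons a ts : Fin (n + 1) → fullLang.Term (Empty ⊕ Fin m)) j)) =
      Fin.cons (Term.realize s a) fun j => Term.realize s (ts j) := by
  funext j
  refine Fin.cases ?_ (fun j' => ?_) j <;> simp

@[simp] lemma funMap_succ_numM (y : ℕ) :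
    Structure.funMap (L := fullLang) (M := M) succSym (fun _ => numM M y) = numM M (y + 1) :=
  rfl

@[simp] lemma numM_cons {n : ℕ} (a : ℕ) (w : Fin n → ℕ) :
    (fun i : Fin (n + 1) => numM M ((Fin.cons a w : Fin (n + 1) → ℕ) i)) =
      Fin.cons (numM M a) fun i => numM M (w i) := by
  funext j
  refine Fin.cases ?_ (fun j' => ?_) j <;> simp

theorem eval_sound {n : ℕ} (t : PTree n)
    (hax : ∀ φ ∈ t.axioms, M ⊨ φ) (v : Fin n → ℕ) :
    Structure.funMap (L := fullLang) (fSym t) (fun i => numM M (v i)) =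
      numM M (t.denote v) := by
  induction t with
  | zero =>
    have h := realize_eqAx (hax _ (List.mem_singleton.2 rfl)) (fun i : Fin 0 => numM M (v i))
    rw [Term.realize_func, realize_num] at h
    have e : (fun i : Fin 0 =>
        Term.realize (Sum.elim (default : Empty → M) fun i : Fin 0 => numM M (v i))
          (finZeroElim (α := fun _ => fullLang.Term (Empty ⊕ Fin 0)) i)) =
        fun i : Fin 0 => numM M (v i) := Subsingleton.elim _ _
    rw [e] at h
    exact h
  | succ =>
    have h := realize_eqAx (hax _ (List.mem_singleton.2 rfl)) (fun _ : Fin 1 => numM M (v 0))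
    have e : (fun i : Fin 1 => numM M (v i)) = fun _ : Fin 1 => numM M (v 0) := by
      funext i
      rw [Subsingleton.elim i 0]
    rw [e]
    exact h
  | get i =>
    have h := realize_eqAx (hax _ (List.mem_singleton.2 rfl)) (fun j => numM M (v j))
    rw [Term.realize_func] at h
    exact h
  | @comp m' n' f g ihf ihg =>
    have hf : ∀ φ ∈ f.axioms, M ⊨ φ := fun φ hφ =>
      hax φ (List.mem_cons_of_mem _ (List.mem_append_left _ hφ))
    have hg : ∀ i, ∀ φ ∈ (g i).axioms, M ⊨ φ := fun i φ hφ =>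
      hax φ (List.mem_cons_of_mem _
        (List.mem_append_right _ (List.mem_flatMap.2 ⟨i, List.mem_finRange i, hφ⟩)))
    have h := realize_eqAx (hax _ (List.mem_cons_self)) (fun j => numM M (v j))
    rw [Term.realize_func, Term.realize_func] at h
    rw [show (fun i => numM M (v i)) =
      (fun j => Term.realize (Sum.elim (default : Empty → M) fun j => numM M (v j)) (X j))
      from rfl, h]
    have e : (fun i => Term.realize (Sum.elim (default : Empty → M) fun j => numM M (v j))
        (Term.func (fSym (g i)) fun j => X j)) = fun i => numM M ((g i).denote v) := by
      funext i
      rw [Term.realize_func]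
      exact ihg i (hg i) v
    rw [e]
    exact ihf hf fun i => (g i).denote v
  | @prec n' f g ihf ihg =>
    have hf : ∀ φ ∈ f.axioms, M ⊨ φ := fun φ hφ =>
      hax φ (List.mem_cons_of_mem _ (List.mem_cons_of_mem _ (List.mem_append_left _ hφ)))
    have hg : ∀ φ ∈ g.axioms, M ⊨ φ := fun φ hφ =>
      hax φ (List.mem_cons_of_mem _ (List.mem_cons_of_mem _ (List.mem_append_right _ hφ)))
    have hax0 := hax _ (List.mem_cons_self)
    have hax1 := hax _ (List.mem_cons_of_mem _ (List.mem_cons_self))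
    have key : ∀ y : ℕ,
        Structure.funMap (L := fullLang) (fSym (f.prec g))
          (Fin.cons (numM M y) fun i => numM M (v i.succ)) =
        numM M (Nat.rec (f.denote (v ∘ Fin.succ))
          (fun z IH => g.denote (Fin.cons z (Fin.cons IH (v ∘ Fin.succ)))) y) := by
      intro y
      induction y with
      | zero =>
        have h := realize_eqAx hax0 (fun i => numM M (v i.succ))
        simp only [Term.realize_func, realize_cons, realize_num, realize_X] at h
        exact h.trans (ihf hf (v ∘ Fin.succ))
      | succ y ihy =>
        have h := realize_eqAx hax1 (Fin.cons (numM M y) fun i => numM M (v i.succ))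
        simp only [Term.realize_func, realize_cons, realize_X, realize_num,
          Fin.cons_zero, Fin.cons_succ, funMap_succ_numM] at h
        rw [ihy] at h
        rw [h]
        have h2 := ihg hg (Fin.cons y (Fin.cons (Nat.rec (f.denote (v ∘ Fin.succ))
          (fun z IH => g.denote (Fin.cons z (Fin.cons IH (v ∘ Fin.succ)))) y) (v ∘ Fin.succ)))
        simp only [numM_cons] at h2
        exact h2
    have e5 : (fun i => numM M (v i)) =
        Fin.cons (numM M (v 0)) fun i => numM M (v i.succ) := by
      funext j
      refine Fin.cases ?_ (fun j' => ?_) j <;> simp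
    rw [e5, key (v 0)]
    rfl

end Sound

lemma realize_eqAx_of {M : Type} [fullLang.Structure M] {n : ℕ}
    {t₁ t₂ : fullLang.Term (Empty ⊕ Fin n)}
    (h : ∀ xs : Fin n → M, t₁.realize (Sum.elim (default : Empty → M) xs) =
      t₂.realize (Sum.elim (default : Empty → M) xs)) :
    M ⊨ (Term.bdEqual t₁ t₂ : fullLang.BoundedFormula Empty n).alls :=
  BoundedFormula.realize_alls.2 fun xs => (BoundedFormula.realize_bdEqual _ _).2 (h xs)

theorem std_axioms {n : ℕ} (t : PTree n) : ∀ φ ∈ t.axioms, Sentence.Realize ℕ φ := by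
  induction t with
  | zero =>
    intro φ hφ
    rw [PTree.axioms, List.mem_singleton] at hφ
    subst hφ
    refine realize_eqAx_of fun xs => ?_
    simp only [Term.realize_func, realize_num, numM_nat, funMap_fSym]
    rfl
  | succ =>
    intro φ hφ
    rw [PTree.axioms, List.mem_singleton] at hφ
    subst hφ
    refine realize_eqAx_of fun xs => ?_
    simp only [Term.realize_func, funMap_fSym]
    rfl
  | get i =>
    intro φ hφ
    rw [PTree.axioms, List.mem_singleton] at hφ
    subst hφ
    refine realize_eqAx_of fun xs => ?_
    simp only [Term.realize_func, funMap_fSym]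
    rfl
  | comp f g ihf ihg =>
    intro φ hφ
    rw [PTree.axioms, List.mem_cons] at hφ
    rcases hφ with rfl | hφ
    · refine realize_eqAx_of fun xs => ?_
      simp only [Term.realize_func, funMap_fSym]
      rfl
    · rw [List.mem_append] at hφ
      rcases hφ with hφ | hφ
      · exact ihf φ hφ
      · obtain ⟨i, -, hφ⟩ := List.mem_flatMap.1 hφ
        exact ihg i φ hφ
  | prec f g ihf ihg =>
    intro φ hφ
    rw [PTree.axioms, List.mem_cons] at hφ
    rcases hφ with rfl | hφ
    · refine realize_eqAx_of fun xs => ?_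
      simp only [Term.realize_func, realize_cons, realize_num, numM_nat, realize_X, funMap_fSym]
      rfl
    · rw [List.mem_cons] at hφ
      rcases hφ with rfl | hφ
      · refine realize_eqAx_of fun xs => ?_
        simp only [Term.realize_func, realize_cons, realize_num, numM_nat, realize_X, funMap_fSym]
        rfl
      · rw [List.mem_append] at hφ
        rcases hφ with hφ | hφ
        · exact ihf φ hφ
        · exact ihg φ hφ

/-- The term `F(num k, x)`. -/
def Fterm (T : PTree 2) (k : ℕ) : fullLang.Term (Empty ⊕ Fin 1) :=
  Term.func (fSym T) (Fin.cons (num k) fun _ => X 0)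

/-- `∀ x, F(num k, x) ≠ 0`. -/
def negPart (T : PTree 2) (k : ℕ) : fullLang.BoundedFormula Empty 0 :=
  BoundedFormula.all ((Term.bdEqual (Fterm T k) (num 0)).imp BoundedFormula.falsum)

/-- The conjunction of the axioms of `T`. -/
def conjAx (T : PTree 2) : fullLang.Sentence := T.axioms.foldr (· ⊓ ·) ⊤

/-- The sentence `¬(Ax → ¬ negPart)`, i.e. `Ax ∧ ∀ x, F(num k, x) ≠ 0`. -/
def psi (T : PTree 2) (k : ℕ) : fullLang.Sentence :=
  ((conjAx T).imp ((negPart T k).imp BoundedFormula.falsum)).imp BoundedFormula.falsum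

lemma realize_falsum' {M : Type} [fullLang.Structure M] {n : ℕ} {v : Empty → M}
    {xs : Fin n → M} :
    (BoundedFormula.falsum : fullLang.BoundedFormula Empty n).Realize v xs ↔ False :=
  Iff.rfl

lemma realize_foldr_inf {M : Type} [fullLang.Structure M] (l : List fullLang.Sentence) :
    M ⊨ l.foldr (· ⊓ ·) ⊤ ↔ ∀ φ ∈ l, M ⊨ φ := by
  induction l with
  | nil => simp [Sentence.Realize, Formula.realize_top]
  | cons a l ih =>
    simp only [List.foldr_cons, List.mem_cons]
    constructor
    · intro h φ hφ
      have h' := Formula.realize_inf.1 h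
      rcases hφ with rfl | hφ
      · exact h'.1
      · exact (ih.1 h'.2) φ hφ
    · intro h
      exact Formula.realize_inf.2 ⟨h a (Or.inl rfl), ih.2 fun φ hφ => h φ (Or.inr hφ)⟩

lemma realize_psi_iff {M : Type} [fullLang.Structure M] (T : PTree 2) (k : ℕ) :
    M ⊨ psi T k ↔ (M ⊨ conjAx T ∧ M ⊨ negPart T k) := by
  constructor
  · intro h
    have hA : M ⊨ conjAx T := by
      by_contra hA
      exact h fun ha => absurd ha hA
    have hB : M ⊨ negPart T k := by
      by_contra hB
      exact h fun _ hb => hB hb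
    exact ⟨hA, hB⟩
  · rintro ⟨hA, hB⟩ h
    exact h hA hB

lemma realize_negPart_iff {M : Type} [fullLang.Structure M] (T : PTree 2) (k : ℕ) :
    M ⊨ negPart T k ↔ ∀ x : M,
      Structure.funMap (L := fullLang) (fSym T) (Fin.cons (numM M k) fun _ => x) ≠
        numM M 0 := by
  have e : (M ⊨ negPart T k) =
      BoundedFormula.Realize (negPart T k) (default : Empty → M) (default : Fin 0 → M) := rfl
  rw [e, negPart, BoundedFormula.realize_all]
  apply forall_congr'
  intro x
  have ht : Term.realize (Sum.elim (default : Empty → M) (Fin.snoc (default : Fin 0 → M) x))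
      (Fterm T k) =
      Structure.funMap (L := fullLang) (fSym T) (Fin.cons (numM M k) fun _ => x) := by
    rw [Fterm, Term.realize_func]
    congr 1
    funext j
    refine Fin.cases ?_ (fun j' => ?_) j
    · rw [Fin.cons_zero, Fin.cons_zero, realize_num]
    · rw [Fin.cons_succ, Fin.cons_succ]
      show (Fin.snoc (default : Fin 0 → M) x : Fin 1 → M) 0 = x
      rw [Subsingleton.elim (0 : Fin 1) (Fin.last 0), Fin.snoc_last]
  rw [BoundedFormula.realize_imp, realize_falsum', BoundedFormula.realize_bdEqual,
    ht, realize_num]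

theorem psi_unsat_iff (T : PTree 2) (k : ℕ) :
    (¬ ∃ (M : Type) (_ : fullLang.Structure M) (_ : Nonempty M),
        Sentence.Realize M (psi T k)) ↔
      ∃ m : ℕ, T.denote (Fin.cons k fun _ => m) = 0 := by
  constructor
  · intro h
    by_contra hm
    push_neg at hm
    apply h
    refine ⟨ℕ, stdStructure, ⟨0⟩, ?_⟩
    rw [realize_psi_iff]
    refine ⟨(realize_foldr_inf _).2 (std_axioms T), (realize_negPart_iff T k).2 fun x => ?_⟩
    simp only [numM_nat, funMap_fSym]
    exact hm x
  · rintro ⟨m, hm⟩ ⟨M, hS, hne, hreal⟩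
    letI := hS
    rw [realize_psi_iff] at hreal
    obtain ⟨haxc, hneg⟩ := hreal
    have hax : ∀ φ ∈ T.axioms, M ⊨ φ := (realize_foldr_inf _).1 haxc
    have he := eval_sound T hax (Fin.cons k fun _ => m)
    rw [hm] at he
    apply (realize_negPart_iff T k).1 hneg (numM M m)
    rw [← he]
    congr 1
    funext j
    refine Fin.cases ?_ (fun j' => ?_) j
    · simp
    · simp

/-! ### Encoding computations -/

/-- The symbol alphabet of formula encodings. -/
abbrev SymL : Type :=
  (Σ k, fullLang.Term (Empty ⊕ Fin k)) ⊕ ((Σ n, fullLang.Relations n) ⊕ ℕ)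

/-- The symbol alphabet of term encodings. -/
abbrev TSymL : Type := (Empty ⊕ Fin 1) ⊕ (Σ i, fullLang.Functions i)

/-- Fixed prefix of the encoding of `psi T k`. -/
def Ppre (T : PTree 2) : List SymL :=
  Sum.inr (Sum.inr 0) :: Sum.inr (Sum.inr 0) ::
    (BoundedFormula.listEncode (conjAx T) ++
      [Sum.inr (Sum.inr 0), Sum.inr (Sum.inr 1), Sum.inr (Sum.inr 0)])

/-- Fixed suffix of the encoding of `psi T k`. -/
def Stail : List SymL :=
  [Sum.inl ⟨1, (num 0 : fullLang.Term (Empty ⊕ Fin 1))⟩,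
    Sum.inr (Sum.inr 3), Sum.inr (Sum.inr 2), Sum.inr (Sum.inr 2)]

lemma listEncode_psi (T : PTree 2) (k : ℕ) :
    BoundedFormula.listEncode (psi T k) =
      Ppre T ++ (Sum.inl ⟨1, Fterm T k⟩ : SymL) :: Stail := by
  simp [psi, negPart, conjAx, Ppre, Stail, BoundedFormula.listEncode, Term.bdEqual]

lemma listEncode_num_succ (k : ℕ) :
    Term.listEncode (num (k + 1) : fullLang.Term (Empty ⊕ Fin 1)) =
      (Sum.inr ⟨1, succSym⟩ : TSymL) :: Term.listEncode (num k) := by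
  have h1 : (List.finRange 1) = [0] := rfl
  simp [num, Term.listEncode, h1]

lemma listEncode_Fterm (T : PTree 2) (k : ℕ) :
    Term.listEncode (Fterm T k) =
      (Sum.inr ⟨2, fSym T⟩ : TSymL) ::
        (Term.listEncode (num k : fullLang.Term (Empty ⊕ Fin 1)) ++
          [(Sum.inl (Sum.inr 0) : TSymL)]) := by
  rfl

/-- Encoding of the argument-list tail of `Fterm`. -/
def uFun (k : ℕ) : ℕ :=
  Encodable.encode (Term.listEncode (num k : fullLang.Term (Empty ⊕ Fin 1)) ++
    [(Sum.inl (Sum.inr 0) : TSymL)])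

/-- The constant for the successor symbol. -/
def cSucc : ℕ := Encodable.encode ((Sum.inr ⟨1, succSym⟩ : TSymL))

lemma uFun_succ (k : ℕ) : uFun (k + 1) = Nat.pair cSucc (uFun k) + 1 := by
  rw [uFun, listEncode_num_succ, List.cons_append, Encodable.encode_list_cons]
  rfl

lemma uFun_eq (k : ℕ) : uFun k = (fun m => Nat.pair cSucc m + 1)^[k] (uFun 0) := by
  induction k with
  | zero => rfl
  | succ k ih => rw [uFun_succ, ih, Function.iterate_succ_apply']

lemma primrec_uFun : Primrec uFun := by
  have h : Primrec fun k : ℕ => (fun m => Nat.pair cSucc m + 1)^[k] (uFun 0) :=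
    Primrec.nat_iterate Primrec.id (Primrec.const (uFun 0))
      (Primrec.succ.comp (Primrec₂.natPair.comp (Primrec.const cSucc) Primrec.snd)).to₂
  exact h.of_eq fun k => (uFun_eq k).symm

lemma encode_append {β : Type} [Encodable β] (p r : List β) :
    Encodable.encode (p ++ r) =
      p.foldr (fun a m => Nat.pair (Encodable.encode a) m + 1) (Encodable.encode r) := by
  induction p with
  | nil => rfl
  | cons a p ih => rw [List.cons_append, Encodable.encode_list_cons, ih]; rfl

lemma primrec_foldr {β : Type} [Encodable β] (p : List β) :
    Primrec fun m => p.foldr (fun a m => Nat.pair (Encodable.encode a) m + 1) m := by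
  induction p with
  | nil => exact Primrec.id
  | cons a p ih =>
    exact Primrec.succ.comp
      (Primrec₂.natPair.comp (Primrec.const (Encodable.encode a)) ih)

lemma encode_term_eq (t : fullLang.Term (Empty ⊕ Fin 1)) :
    Encodable.encode t = Encodable.encode (Term.listEncode t) := rfl

lemma sentenceCode_psi (T : PTree 2) (k : ℕ) :
    sentenceCode (psi T k) =
      (Ppre T).foldr (fun a m => Nat.pair (Encodable.encode a) m + 1)
        (Nat.pair
          (2 * Nat.pair 1
            (Nat.pair (Encodable.encode ((Sum.inr ⟨2, fSym T⟩ : TSymL))) (uFun k) + 1))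
          (Encodable.encode Stail) + 1) := by
  rw [sentenceCode, listEncode_psi, encode_append, Encodable.encode_list_cons]
  congr 2

lemma primrec_code (T : PTree 2) : Primrec fun k => sentenceCode (psi T k) := by
  have h : Primrec fun k : ℕ =>
      (Ppre T).foldr (fun a m => Nat.pair (Encodable.encode a) m + 1)
        (Nat.pair
          (2 * Nat.pair 1
            (Nat.pair (Encodable.encode ((Sum.inr ⟨2, fSym T⟩ : TSymL))) (uFun k) + 1))
          (Encodable.encode Stail) + 1) := by
    refine (primrec_foldr (Ppre T)).comp ?_
    refine Primrec.succ.comp (Primrec₂.natPair.comp ?_ (Primrec.const _))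
    refine Primrec.nat_mul.comp (Primrec.const 2) ?_
    refine Primrec₂.natPair.comp (Primrec.const 1) ?_
    exact Primrec.succ.comp (Primrec₂.natPair.comp (Primrec.const _) primrec_uFun)
  exact h.of_eq fun k => (sentenceCode_psi T k).symm

end Sigma1Hard

open Sigma1Hard Nat.Partrec Language

/-- The set of codes of classically unsatisfiable sentences of the full vocabulary is
`Σ₁`-hard: every recursively enumerable `A ⊆ ℕ` is many-one reducible to it. -/
theorem unsat_sigma1_hard (A : Set ℕ)
    (hA : ∃ f : ℕ →. ℕ, Partrec f ∧ ∀ k, k ∈ A ↔ (f k).Dom) :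
    ManyOneReducible (· ∈ A)
      (fun k : ℕ => ∃ φ : fullLang.Sentence, sentenceCode φ = k ∧
        ¬ ∃ (M : Type) (_ : fullLang.Structure M) (_ : Nonempty M),
          Language.Sentence.Realize M φ) := by
  obtain ⟨f, pf, hf⟩ := hA
  obtain ⟨c, hc⟩ := Nat.Partrec.Code.exists_code.1 (Partrec.nat_iff.1 pf)
  set d : ℕ → ℕ → ℕ := fun k m => bif (Nat.Partrec.Code.evaln m c k).isSome then 0 else 1
    with hd
  have hdp : Primrec₂ d := by
    have h1 : Primrec fun p : ℕ × ℕ => Nat.Partrec.Code.evaln p.2 c p.1 :=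
      Nat.Partrec.Code.primrec_evaln.comp ((Primrec.snd.pair (Primrec.const c)).pair Primrec.fst)
    exact (Primrec.cond (Primrec.option_isSome.comp h1)
      (Primrec.const 0) (Primrec.const 1)).to₂
  obtain ⟨T, hT⟩ := exists_tree (Nat.Primrec'.prim_iff₂.2 hdp)
  have hTd : ∀ k m : ℕ, T.denote (Fin.cons k fun _ => m) = d k m := by
    intro k m
    have := hT (k ::ᵥ m ::ᵥ List.Vector.nil)
    simp only [List.Vector.head_cons, List.Vector.tail_cons] at this
    rw [← this]
    congr 1
    funext j
    refine Fin.cases ?_ (fun j' => ?_) j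
    · simp
    · refine Fin.cases ?_ (fun j'' => ?_) j'
      · rw [show ((0 : Fin 1).succ : Fin 2) = Fin.succ 0 from rfl,
          List.Vector.get_cons_succ]
        simp
      · exact j''.elim0
  have hdom : ∀ k : ℕ, (f k).Dom ↔ ∃ m : ℕ, d k m = 0 := by
    intro k
    constructor
    · intro h
      obtain ⟨x, hx⟩ := Part.dom_iff_mem.1 h
      rw [← hc] at hx
      obtain ⟨m, hm⟩ := Nat.Partrec.Code.evaln_complete.1 hx
      refine ⟨m, ?_⟩
      rw [hd]
      simp only [Option.mem_def] at hm
      simp [hm]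
    · rintro ⟨m, hm⟩
      rw [hd] at hm
      rcases ho : (Nat.Partrec.Code.evaln m c k).isSome with _ | _
      · simp [ho] at hm
      · obtain ⟨x, hx⟩ := Option.isSome_iff_exists.1 ho
        have := Nat.Partrec.Code.evaln_sound (Option.mem_def.2 hx)
        rw [hc] at this
        exact Part.dom_iff_mem.2 ⟨x, this⟩
  refine ⟨fun k => sentenceCode (psi T k), Primrec.to_comp (primrec_code T), fun k => ?_⟩
  constructor
  · intro hk
    refine ⟨psi T k, rfl, ?_⟩
    rw [psi_unsat_iff T k]
    obtain ⟨m, hm⟩ := (hdom k).1 ((hf k).1 hk)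
    exact ⟨m, by rw [hTd k m]; exact hm⟩
  · rintro ⟨φ, hcode, hunsat⟩
    have hφ : φ = psi T k := by
      have h1 : BoundedFormula.listEncode φ = BoundedFormula.listEncode (psi T k) :=
        Encodable.encode_injective hcode
      have h2 := BoundedFormula.listEncode_sigma_injective
        (show (fun ψ : Σ n, fullLang.BoundedFormula Empty n => ψ.2.listEncode)
          ⟨0, φ⟩ = (fun ψ : Σ n, fullLang.BoundedFormula Empty n => ψ.2.listEncode)
          ⟨0, psi T k⟩ from h1)
      exact eq_of_heq (Sigma.mk.inj_iff.1 h2).2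
    rw [hφ] at hunsat
    obtain ⟨m, hm⟩ := (psi_unsat_iff T k).1 hunsat
    rw [hTd k m] at hm
    exact (hf k).2 ((hdom k).2 ⟨m, hm⟩)
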